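/- arXiv:2406.13973 — 4 statements merged into one kernel-verified Lean document; each statement's English description precedes it below -/
import Mathlib

section
/- The ring homomorphism A/(x₁⋯xₙ) → ∏_{i=1}^{n} A/(xᵢ) induced by the quotient maps is injective, and its range consists exactly of the tuples (f̄ᵢ)ᵢ such that for all i ≠ j the images of f̄ᵢ and f̄ⱼ under the natural maps A/(xᵢ) → A/(xᵢ,xⱼ) and A/(xⱼ) → A/(xᵢ,xⱼ) coincide. Equivalently: for every family of polynomials f₁,…,fₙ ∈ A with fᵢ ≡ fⱼ mod (xᵢ,xⱼ) for all i ≠ j, there exists f ∈ A with f ≡ fᵢ mod (xᵢ) for all i, and f is unique modulo the ideal (x₁⋯xₙ). -/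
open MvPolynomial

private lemma x_dvd_sub_aeval {k : Type} [Field k] {n : ℕ} (i : Fin n)
    (p : MvPolynomial (Fin n) k) :
    (X i : MvPolynomial (Fin n) k) ∣ p - aeval (Function.update X i 0) p := by
  induction p using MvPolynomial.induction_on with
  | C a => simp
  | add p q hp hq =>
      have := dvd_add hp hq
      simpa [sub_add_sub_comm, map_add] using this
  | mul_X p j hp =>
      by_cases h : j = i
      · subst h
        simp only [map_mul, aeval_X, Function.update_self, mul_zero, sub_zero]
        exact Dvd.intro p (mul_comm _ _)
      · have : p * X j - aeval (Function.update X i 0) (p * X j)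
            = (p - aeval (Function.update X i 0) p) * X j := by
          simp only [map_mul, aeval_X, Function.update_of_ne h]
          ring
        rw [this]
        exact hp.mul_right _

private lemma x_dvd_iff {k : Type} [Field k] {n : ℕ} (i : Fin n) (p : MvPolynomial (Fin n) k) :
    (X i : MvPolynomial (Fin n) k) ∣ p ↔
      aeval (Function.update X i 0) p = (0 : MvPolynomial (Fin n) k) := by
  constructor
  · rintro ⟨q, rfl⟩
    simp [Function.update_self]
  · intro h
    have := x_dvd_sub_aeval i p
    rwa [h, sub_zero] at this

private lemma prod_x_dvd {k : Type} [Field k] {n : ℕ} (p : MvPolynomial (Fin n) k)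
    (h : ∀ i : Fin n, (X i : MvPolynomial (Fin n) k) ∣ p) :
    (∏ j : Fin n, (X j : MvPolynomial (Fin n) k)) ∣ p := by
  have key : ∀ s : Finset (Fin n), (∏ j ∈ s, (X j : MvPolynomial (Fin n) k)) ∣ p := by
    intro s
    induction s using Finset.induction_on with
    | empty => simp
    | @insert a s ha ih =>
        obtain ⟨g, hg⟩ := ih
        have hXa : (X a : MvPolynomial (Fin n) k) ∣ (∏ j ∈ s, X j) * g := hg ▸ h a
        have h0 : aeval (Function.update X a 0) ((∏ j ∈ s, (X j : MvPolynomial (Fin n) k)) * g)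
            = (0 : MvPolynomial (Fin n) k) := (x_dvd_iff a _).mp hXa
        rw [map_mul, map_prod] at h0
        have hprod : (∏ j ∈ s, aeval (Function.update X a 0) (X j : MvPolynomial (Fin n) k))
            = ∏ j ∈ s, (X j : MvPolynomial (Fin n) k) := by
          refine Finset.prod_congr rfl fun j hj => ?_
          have hja : j ≠ a := by rintro rfl; exact ha hj
          rw [aeval_X, Function.update_of_ne hja]
        rw [hprod] at h0
        have hne : (∏ j ∈ s, (X j : MvPolynomial (Fin n) k)) ≠ 0 :=
          Finset.prod_ne_zero_iff.mpr fun j _ => X_ne_zero j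
        have hg0 : aeval (Function.update X a 0) g = (0 : MvPolynomial (Fin n) k) :=
          (mul_eq_zero.mp h0).resolve_left hne
        obtain ⟨g', rfl⟩ := (x_dvd_iff a g).mpr hg0
        rw [Finset.prod_insert ha, hg]
        ring_nf
        exact Dvd.intro g' (by ring)
  exact key Finset.univ

private lemma glue_exists {k : Type} [Field k] {n : ℕ} (f : Fin n → MvPolynomial (Fin n) k)
    (hf : ∀ i j : Fin n, i ≠ j →
      f i - f j ∈ Ideal.span {(X i : MvPolynomial (Fin n) k), (X j : MvPolynomial (Fin n) k)})
    (s : Finset (Fin n)) :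
    ∃ g : MvPolynomial (Fin n) k, ∀ i ∈ s, (X i : MvPolynomial (Fin n) k) ∣ g - f i := by
  induction s using Finset.induction_on with
  | empty => exact ⟨0, by simp⟩
  | @insert a s ha ih =>
      obtain ⟨g, hg⟩ := ih
      refine ⟨g + aeval (Function.update X a 0) (f a - g), fun i hi => ?_⟩
      rcases Finset.mem_insert.mp hi with rfl | hi
      · have h1 := (x_dvd_sub_aeval i (f i - g)).neg_right
        convert h1 using 1; ring
      · have hia : i ≠ a := fun h => ha (h ▸ hi)
        have h1 : (X i : MvPolynomial (Fin n) k) ∣ g - f i := hg i hi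
        have h2 : (X i : MvPolynomial (Fin n) k) ∣
            aeval (Function.update X a 0) (f a - g) := by
          obtain ⟨u, v, huv⟩ := Ideal.mem_span_pair.mp (hf a i hia.symm)
          obtain ⟨w, hw⟩ := h1
          have : f a - g = u * X a + v * X i - X i * w := by
            rw [← hw, huv]; ring
          rw [this]
          simp only [map_add, map_sub, map_mul, aeval_X, Function.update_self,
            Function.update_of_ne hia]
          exact ⟨aeval (Function.update X a 0) v - aeval (Function.update X a 0) w,
            by ring⟩
        have := dvd_add h1 h2
        convert this using 1; ring


/-- Chinese-remainder–style gluing for the simple normal crossings model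
`k[x₁,…,xₙ]/(x₁⋯xₙ) → ∏ᵢ k[x₁,…,xₙ]/(xᵢ)`:  the induced ring homomorphism is injective and
its range consists exactly of the compatible tuples; equivalently, every family of
polynomials agreeing pairwise modulo `(xᵢ, xⱼ)` glues to a polynomial, uniquely modulo
`(x₁⋯xₙ)`. -/
theorem statement0 (k : Type) [Field k] (n : ℕ) (hn : 1 ≤ n) :
    (Function.Injective
        (Pi.ringHom fun i : Fin n =>
          Ideal.Quotient.factor
            (S := Ideal.span {∏ j : Fin n, (X j : MvPolynomial (Fin n) k)})
            (T := Ideal.span {(X i : MvPolynomial (Fin n) k)})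
            (Ideal.span_singleton_le_span_singleton.mpr
              (Finset.dvd_prod_of_mem _ (Finset.mem_univ i)))) ∧
      ∀ s : ∀ i : Fin n, MvPolynomial (Fin n) k ⧸ Ideal.span {(X i : MvPolynomial (Fin n) k)},
        (s ∈ Set.range
            (Pi.ringHom fun i : Fin n =>
              Ideal.Quotient.factor
                (S := Ideal.span {∏ j : Fin n, (X j : MvPolynomial (Fin n) k)})
                (T := Ideal.span {(X i : MvPolynomial (Fin n) k)})
                (Ideal.span_singleton_le_span_singleton.mpr
                  (Finset.dvd_prod_of_mem _ (Finset.mem_univ i)))) ↔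
          ∀ i j : Fin n, i ≠ j →
            Ideal.Quotient.factor (S := Ideal.span {(X i : MvPolynomial (Fin n) k)})
                (T := Ideal.span {(X i : MvPolynomial (Fin n) k)} ⊔
                  Ideal.span {(X j : MvPolynomial (Fin n) k)}) le_sup_left (s i) =
              Ideal.Quotient.factor (S := Ideal.span {(X j : MvPolynomial (Fin n) k)})
                (T := Ideal.span {(X i : MvPolynomial (Fin n) k)} ⊔
                  Ideal.span {(X j : MvPolynomial (Fin n) k)}) le_sup_right (s j))) ∧
    ∀ f : Fin n → MvPolynomial (Fin n) k,
      (∀ i j : Fin n, i ≠ j →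
          f i - f j ∈
            Ideal.span {(X i : MvPolynomial (Fin n) k), (X j : MvPolynomial (Fin n) k)}) →
        (∃ g : MvPolynomial (Fin n) k,
            ∀ i : Fin n, g - f i ∈ Ideal.span {(X i : MvPolynomial (Fin n) k)}) ∧
          ∀ g g' : MvPolynomial (Fin n) k,
            (∀ i : Fin n, g - f i ∈ Ideal.span {(X i : MvPolynomial (Fin n) k)}) →
            (∀ i : Fin n, g' - f i ∈ Ideal.span {(X i : MvPolynomial (Fin n) k)}) →
            g - g' ∈ Ideal.span {∏ j : Fin n, (X j : MvPolynomial (Fin n) k)} := by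
  refine ⟨⟨?_, ?_⟩, ?_⟩
  · -- injectivity
    intro a b hab
    obtain ⟨p, rfl⟩ := Ideal.Quotient.mk_surjective a
    obtain ⟨q, rfl⟩ := Ideal.Quotient.mk_surjective b
    have hdvd : ∀ i : Fin n, (X i : MvPolynomial (Fin n) k) ∣ p - q := by
      intro i
      have := congrFun hab i
      simp only [Pi.ringHom, Pi.ringHom_apply, Ideal.Quotient.factor_mk] at this
      exact Ideal.mem_span_singleton.mp (Ideal.Quotient.eq.mp this)
    exact Ideal.Quotient.eq.mpr (Ideal.mem_span_singleton.mpr (prod_x_dvd _ hdvd))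
  · -- range characterization
    intro s
    constructor
    · rintro ⟨q, rfl⟩ i j hij
      obtain ⟨p, rfl⟩ := Ideal.Quotient.mk_surjective q
      simp only [Pi.ringHom, Pi.ringHom_apply, Ideal.Quotient.factor_mk]
    · intro hs
      choose f hfi using fun i => Ideal.Quotient.mk_surjective (s i)
      have hcomp : ∀ i j : Fin n, i ≠ j →
          f i - f j ∈ Ideal.span {(X i : MvPolynomial (Fin n) k), (X j : MvPolynomial (Fin n) k)} := by
        intro i j hij
        have := hs i j hij
        rw [← hfi i, ← hfi j, Ideal.Quotient.factor_mk, Ideal.Quotient.factor_mk] at this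
        rw [show ({(X i : MvPolynomial (Fin n) k), (X j : MvPolynomial (Fin n) k)} :
            Set (MvPolynomial (Fin n) k)) = insert (X i) {X j} from rfl, Ideal.span_insert]
        exact Ideal.Quotient.eq.mp this
      obtain ⟨g, hg⟩ := glue_exists f hcomp Finset.univ
      refine ⟨Ideal.Quotient.mk _ g, funext fun i => ?_⟩
      simp only [Pi.ringHom, Pi.ringHom_apply, Ideal.Quotient.factor_mk]
      rw [← hfi i]
      exact Ideal.Quotient.eq.mpr
        (Ideal.mem_span_singleton.mpr (hg i (Finset.mem_univ i)))
  · -- gluing existence and uniqueness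
    intro f hf
    constructor
    · obtain ⟨g, hg⟩ := glue_exists f hf Finset.univ
      exact ⟨g, fun i => Ideal.mem_span_singleton.mpr (hg i (Finset.mem_univ i))⟩
    · intro g g' hg hg'
      refine Ideal.mem_span_singleton.mpr (prod_x_dvd _ fun i => ?_)
      have : g - g' = (g - f i) - (g' - f i) := by ring
      rw [this]
      exact dvd_sub (Ideal.mem_span_singleton.mp (hg i))
        (Ideal.mem_span_singleton.mp (hg' i))
end

section
/- The ring homomorphism S → ∏_{i=1}^{n} Sᵢ induced by the quotient maps qᵢ is injective, and its range consists exactly of the compatible tuples, i.e. the tuples (sᵢ)ᵢ ∈ ∏ᵢ Sᵢ such that for all i ≠ j the images of sᵢ and sⱼ under the natural maps Sᵢ → S_{ij} and Sⱼ → S_{ij} coincide. (In the language of the paper: (S, Sᵢ, qᵢ) is fiber product data, i.e. S is flat over the simple normal crossings model and hence is the fiber product of the Sᵢ.) -/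
open MvPolynomial

/-- The principal ideal `(x₁ ⋯ xₙ)` in `k[x₁,…,xₙ]`. -/
noncomputable abbrev sncIdeal (k : Type) [Field k] (n : ℕ) : Ideal (MvPolynomial (Fin n) k) :=
  Ideal.span {∏ i : Fin n, (X i : MvPolynomial (Fin n) k)}

/-- The simple normal crossings model `R = k[x₁,…,xₙ]/(x₁⋯xₙ)`. -/
abbrev SNCModel (k : Type) [Field k] (n : ℕ) : Type :=
  MvPolynomial (Fin n) k ⧸ sncIdeal k n

/-- For an algebra `S` over the simple normal crossings model, the ideal `Iᵢ ⊆ S`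
generated by the image of `xᵢ`. -/
def xIdeal (k : Type) [Field k] (n : ℕ) (S : Type) [CommRing S]
    [Algebra (SNCModel k n) S] (i : Fin n) : Ideal S :=
  Ideal.span {algebraMap (SNCModel k n) S (Ideal.Quotient.mk (sncIdeal k n) (X i))}


open TensorProduct

section FlatInf

variable {R S : Type*} [CommRing R] [CommRing S] [Algebra R S]

theorem aux_tensor_zero (I : Ideal R) {x : S} (hx : x ∈ Ideal.map (algebraMap R S) I) :
    TensorProduct.AlgebraTensorModule.lTensor S S (Submodule.mkQ (I : Submodule R R))
      (x ⊗ₜ[R] (1 : R)) = 0 := by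
  set ψ : S →ₗ[S] S ⊗[R] (R ⧸ (I : Submodule R R)) :=
    (TensorProduct.AlgebraTensorModule.lTensor S S (Submodule.mkQ (I : Submodule R R))).comp
      (TensorProduct.AlgebraTensorModule.rid R S S).symm.toLinearMap with hψ
  have key : Ideal.map (algebraMap R S) I ≤ LinearMap.ker ψ := by
    rw [Ideal.map_le_iff_le_comap]
    intro r hr
    simp only [Ideal.mem_comap, LinearMap.mem_ker, hψ, LinearMap.comp_apply,
      LinearEquiv.coe_coe, TensorProduct.AlgebraTensorModule.rid_symm_apply]
    have h1 : (algebraMap R S r) ⊗ₜ[R] (1 : R) = (1 : S) ⊗ₜ[R] r := by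
      rw [Algebra.algebraMap_eq_smul_one, TensorProduct.smul_tmul, smul_eq_mul, mul_one]
    rw [h1, TensorProduct.AlgebraTensorModule.lTensor_tmul]
    rw [show Submodule.mkQ (I : Submodule R R) r = 0 from
      (Submodule.Quotient.mk_eq_zero _).mpr hr, TensorProduct.tmul_zero]
  have := key hx
  rw [LinearMap.mem_ker, hψ, LinearMap.comp_apply, LinearEquiv.coe_coe,
    TensorProduct.AlgebraTensorModule.rid_symm_apply] at this
  exact this

theorem flat_map_inf [Module.Flat R S] (I J : Ideal R) :
    Ideal.map (algebraMap R S) (I ⊓ J) =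
      Ideal.map (algebraMap R S) I ⊓ Ideal.map (algebraMap R S) J := by
  refine le_antisymm (le_inf (Ideal.map_mono inf_le_left) (Ideal.map_mono inf_le_right)) ?_
  intro x hx
  obtain ⟨hxI, hxJ⟩ := Ideal.mem_inf.mp hx
  -- first exact sequence
  have hker1 := Module.Flat.ker_lTensor_eq S S (Submodule.mkQ (I : Submodule R R))
  rw [Submodule.ker_mkQ] at hker1
  have hx1 : x ⊗ₜ[R] (1 : R) ∈
      LinearMap.ker (TensorProduct.AlgebraTensorModule.lTensor S S
        (Submodule.mkQ (I : Submodule R R))) := aux_tensor_zero I hxI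
  rw [hker1] at hx1
  obtain ⟨u, hu⟩ := hx1
  -- second exact sequence
  set g : (I : Submodule R R) →ₗ[R] R ⧸ (J : Submodule R R) :=
    (Submodule.mkQ (J : Submodule R R)).comp (Submodule.subtype (I : Submodule R R)) with hg
  have hker2 := Module.Flat.ker_lTensor_eq S S g
  have hu2 : u ∈ LinearMap.ker (TensorProduct.AlgebraTensorModule.lTensor S S g) := by
    rw [LinearMap.mem_ker, hg, TensorProduct.AlgebraTensorModule.lTensor_comp,
      LinearMap.comp_apply, hu]
    exact aux_tensor_zero J hxJ
  rw [hker2] at hu2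
  obtain ⟨v, hv⟩ := hu2
  -- conclude
  have hxv : x = (TensorProduct.AlgebraTensorModule.rid R S S)
      ((TensorProduct.AlgebraTensorModule.lTensor S S
        ((Submodule.subtype (I : Submodule R R)).comp
          (Submodule.subtype (LinearMap.ker g)))) v) := by
    rw [TensorProduct.AlgebraTensorModule.lTensor_comp, LinearMap.comp_apply, hv, hu,
      TensorProduct.AlgebraTensorModule.rid_tmul, one_smul]
  rw [hxv]
  clear hxv hv hu
  induction v with
  | zero => simp only [map_zero]; exact Ideal.zero_mem _
  | tmul s y =>
      obtain ⟨⟨r, hrI⟩, hy⟩ := y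
      have hrJ : r ∈ J := by
        have : g ⟨r, hrI⟩ = 0 := hy
        simpa [hg, Ideal.Quotient.eq_zero_iff_mem] using this
      simp only [TensorProduct.AlgebraTensorModule.lTensor_tmul, LinearMap.comp_apply,
        Submodule.coe_subtype, TensorProduct.AlgebraTensorModule.rid_tmul]
      rw [Algebra.smul_def]
      exact Ideal.mul_mem_right _ _
        (Ideal.mem_map_of_mem _ (Ideal.mem_inf.mpr ⟨hrI, hrJ⟩))
  | add a b ha hb =>
      rw [map_add, map_add]
      exact Ideal.add_mem _ ha hb

end FlatInf


open MvPolynomial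

section Poly

variable {k : Type} [Field k] {n : ℕ}

theorem monomial_one_dvd_iff {d : Fin n →₀ ℕ} {p : MvPolynomial (Fin n) k} :
    monomial d (1 : k) ∣ p ↔ ∀ m : Fin n →₀ ℕ, ¬ d ≤ m → coeff m p = 0 := by
  rw [MvPolynomial.monomial_one_dvd_iff_modMonomial_eq_zero]
  constructor
  · intro h m hm
    have := congrArg (coeff m) h
    rwa [MvPolynomial.coeff_modMonomial_of_not_le _ hm, coeff_zero] at this
  · intro h
    ext m
    by_cases hle : d ≤ m
    · rw [MvPolynomial.coeff_modMonomial_of_le _ hle, coeff_zero]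
    · rw [MvPolynomial.coeff_modMonomial_of_not_le _ hle, coeff_zero]
      exact h m hle
  
theorem prod_X_eq_monomial' (T : Finset (Fin n)) :
    (∏ i ∈ T, (X i : MvPolynomial (Fin n) k)) =
      monomial (∑ i ∈ T, Finsupp.single i 1) (1 : k) := by
  classical
  induction T using Finset.induction_on with
  | empty => simp [monomial_zero']
  | insert _ _ ha ih =>
      rw [Finset.prod_insert ha, Finset.sum_insert ha, ih, X,
        monomial_mul, one_mul]

theorem pmul {T : Finset (Fin n)} {p : MvPolynomial (Fin n) k}
    (h : ∀ i ∈ T, (X i : MvPolynomial (Fin n) k) ∣ p) :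
    (∏ i ∈ T, (X i : MvPolynomial (Fin n) k)) ∣ p := by
  classical
  rw [prod_X_eq_monomial', monomial_one_dvd_iff]
  intro m hm
  have : ∃ a, ¬ (∑ i ∈ T, Finsupp.single i (1:ℕ)) a ≤ m a := by
    by_contra hc
    push_neg at hc
    exact hm (Finsupp.le_def.mpr hc)
  obtain ⟨a, ha⟩ := this
  have haT : a ∈ T ∧ m a = 0 := by
    by_cases haT : a ∈ T
    · refine ⟨haT, ?_⟩
      have : (∑ i ∈ T, Finsupp.single i (1:ℕ)) a = 1 := by
        rw [Finsupp.finset_sum_apply]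
        rw [Finset.sum_eq_single a (fun b _ hb => Finsupp.single_eq_of_ne' hb) (fun h => absurd haT h)]
        simp
      rw [this] at ha
      omega
    · exfalso
      apply ha
      have : (∑ i ∈ T, Finsupp.single i (1:ℕ)) a = 0 := by
        rw [Finsupp.finset_sum_apply]
        exact Finset.sum_eq_zero fun b hb => Finsupp.single_eq_of_ne' (by rintro rfl; exact haT hb)
      simp [this]
  have hXa := h a haT.1
  rw [show (X a : MvPolynomial (Fin n) k) = monomial (Finsupp.single a 1) 1 from rfl,
    monomial_one_dvd_iff] at hXa
  apply hXa
  intro hle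
  have := Finsupp.le_def.mp hle a
  simp [haT.2] at this

theorem inf_span_X (T : Finset (Fin n)) :
    (T.inf fun i => Ideal.span {(X i : MvPolynomial (Fin n) k)}) =
      Ideal.span {∏ i ∈ T, (X i : MvPolynomial (Fin n) k)} := by
  refine le_antisymm ?_ (Finset.le_inf fun i hi =>
    Ideal.span_singleton_le_span_singleton.mpr (Finset.dvd_prod_of_mem _ hi))
  intro f hf
  rw [Submodule.mem_finsetInf] at hf
  rw [Ideal.mem_span_singleton]
  exact pmul fun i hi => Ideal.mem_span_singleton.mp (hf i hi)

end Poly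

section Poly2

variable {k : Type} [Field k] {n : ℕ}

theorem sub_aeval_mem (j : Fin n) (f : MvPolynomial (Fin n) k) :
    f - (aeval fun i => if i = j then 0 else (X i : MvPolynomial (Fin n) k)) f ∈
      Ideal.span {(X j : MvPolynomial (Fin n) k)} := by
  set φ : MvPolynomial (Fin n) k →ₐ[k] MvPolynomial (Fin n) k :=
    aeval fun i => if i = j then 0 else X i with hφ
  have h : (Ideal.Quotient.mkₐ k (Ideal.span {(X j : MvPolynomial (Fin n) k)})).comp φ =
      Ideal.Quotient.mkₐ k _ := by
    apply MvPolynomial.algHom_ext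
    intro i
    by_cases hi : i = j
    · have e2 : φ (X i) = 0 := by simp [hφ, hi]
      rw [AlgHom.comp_apply, e2, map_zero, Ideal.Quotient.mkₐ_eq_mk]
      refine (Ideal.Quotient.eq_zero_iff_mem.mpr (Ideal.subset_span ?_)).symm
      simp [hi]
    · have e1 : φ (X i) = X i := by simp [hφ, hi]
      rw [AlgHom.comp_apply, e1]
  have hf := AlgHom.congr_fun h f
  rw [AlgHom.comp_apply, Ideal.Quotient.mkₐ_eq_mk] at hf
  exact (Ideal.Quotient.mk_eq_mk_iff_sub_mem _ _).mp hf.symm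

theorem snc_key_A {T : Finset (Fin n)} {j : Fin n} (hj : j ∉ T) :
    Ideal.span {(X j : MvPolynomial (Fin n) k)} ⊔
        Ideal.span {∏ i ∈ T, (X i : MvPolynomial (Fin n) k)} =
      T.inf fun i => Ideal.span {(X i : MvPolynomial (Fin n) k)} ⊔
        Ideal.span {(X j : MvPolynomial (Fin n) k)} := by
  refine le_antisymm (sup_le (Finset.le_inf fun i hi => le_sup_right)
    (Finset.le_inf fun i hi => le_trans
      (Ideal.span_singleton_le_span_singleton.mpr (Finset.dvd_prod_of_mem _ hi)) le_sup_left)) ?_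
  intro f hf
  rw [Submodule.mem_finsetInf] at hf
  set φ : MvPolynomial (Fin n) k →ₐ[k] MvPolynomial (Fin n) k :=
    aeval fun i => if i = j then 0 else X i with hφ
  have h1 : f - φ f ∈ Ideal.span {(X j : MvPolynomial (Fin n) k)} := sub_aeval_mem j f
  have h2 : ∀ i ∈ T, (X i : MvPolynomial (Fin n) k) ∣ φ f := by
    intro i hi
    obtain ⟨a, ha, b, hb, hab⟩ := Submodule.mem_sup.mp (hf i hi)
    obtain ⟨c, rfl⟩ := Ideal.mem_span_singleton.mp ha
    obtain ⟨d, rfl⟩ := Ideal.mem_span_singleton.mp hb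
    have hij : i ≠ j := fun h => hj (h ▸ hi)
    have e1 : φ (X i) = X i := by simp [hφ, hij]
    have e2 : φ (X j) = 0 := by simp [hφ]
    rw [← hab, map_add, map_mul, map_mul, e1, e2, zero_mul, add_zero]
    exact Dvd.intro _ rfl
  have h3 : φ f ∈ Ideal.span {∏ i ∈ T, (X i : MvPolynomial (Fin n) k)} :=
    Ideal.mem_span_singleton.mpr (pmul h2)
  have := Submodule.add_mem_sup h1 h3
  rwa [sub_add_cancel] at this

end Poly2

section Helpers

theorem comap_finset_inf {R S ι : Type*} [CommRing R] [CommRing S] [DecidableEq ι]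
    (f : R →+* S) (T : Finset ι) (g : ι → Ideal S) :
    Ideal.comap f (T.inf g) = T.inf fun i => Ideal.comap f (g i) := by
  induction T using Finset.induction_on with
  | empty => simp
  | insert _ _ h ih => simp [Finset.inf_insert, Ideal.comap_inf, ih]

theorem map_finset_inf_flat {R S ι : Type*} [CommRing R] [CommRing S] [Algebra R S]
    [Module.Flat R S] [DecidableEq ι] (T : Finset ι) (g : ι → Ideal R) :
    Ideal.map (algebraMap R S) (T.inf g) = T.inf fun i => Ideal.map (algebraMap R S) (g i) := by
  induction T using Finset.induction_on with
  | empty => simp [Ideal.map_top]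
  | insert _ _ h ih => simp [Finset.inf_insert, flat_map_inf, ih]

end Helpers

section RLevel

variable {k : Type} [Field k] {n : ℕ}

theorem hPle (i : Fin n) : sncIdeal k n ≤ Ideal.span {(X i : MvPolynomial (Fin n) k)} :=
  Ideal.span_singleton_le_span_singleton.mpr (Finset.dvd_prod_of_mem _ (Finset.mem_univ i))

theorem comap_map_span {U : Ideal (MvPolynomial (Fin n) k)} (hU : sncIdeal k n ≤ U) :
    Ideal.comap (Ideal.Quotient.mk (sncIdeal k n))
      (Ideal.map (Ideal.Quotient.mk (sncIdeal k n)) U) = U := by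
  rw [Ideal.comap_map_of_surjective _ Ideal.Quotient.mk_surjective,
    ← RingHom.ker_eq_comap_bot, Ideal.mk_ker]
  exact sup_eq_left.mpr hU

theorem snc_inf_R (T : Finset (Fin n)) :
    (T.inf fun i => Ideal.map (Ideal.Quotient.mk (sncIdeal k n))
        (Ideal.span {(X i : MvPolynomial (Fin n) k)})) =
      Ideal.map (Ideal.Quotient.mk (sncIdeal k n))
        (Ideal.span {∏ i ∈ T, (X i : MvPolynomial (Fin n) k)}) := by
  classical
  apply Ideal.comap_injective_of_surjective _ Ideal.Quotient.mk_surjective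
  rw [comap_finset_inf, comap_map_span (Ideal.span_singleton_le_span_singleton.mpr
    (Finset.prod_dvd_prod_of_subset T Finset.univ _ (Finset.subset_univ T))),
    Finset.inf_congr rfl fun i _ => comap_map_span (hPle i)]
  exact inf_span_X T

theorem snc_key_R {T : Finset (Fin n)} {j : Fin n} (hj : j ∉ T) :
    (T.inf fun i => Ideal.map (Ideal.Quotient.mk (sncIdeal k n))
          (Ideal.span {(X i : MvPolynomial (Fin n) k)} ⊔
            Ideal.span {(X j : MvPolynomial (Fin n) k)})) =
      Ideal.map (Ideal.Quotient.mk (sncIdeal k n))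
          (Ideal.span {(X j : MvPolynomial (Fin n) k)}) ⊔
        T.inf fun i => Ideal.map (Ideal.Quotient.mk (sncIdeal k n))
          (Ideal.span {(X i : MvPolynomial (Fin n) k)}) := by
  classical
  rw [snc_inf_R, ← Ideal.map_sup]
  apply Ideal.comap_injective_of_surjective _ Ideal.Quotient.mk_surjective
  rw [comap_finset_inf, comap_map_span (le_trans (hPle j) le_sup_left),
    Finset.inf_congr rfl fun i (_ : i ∈ T) =>
      comap_map_span (le_trans (hPle i) le_sup_left)]
  exact (snc_key_A hj).symm

end RLevel

section SLevel

variable {k : Type} [Field k] {n : ℕ} {S : Type} [CommRing S]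
  [Algebra (SNCModel k n) S]

theorem xIdeal_eq (i : Fin n) :
    xIdeal k n S i = Ideal.map (algebraMap (SNCModel k n) S)
      (Ideal.map (Ideal.Quotient.mk (sncIdeal k n))
        (Ideal.span {(X i : MvPolynomial (Fin n) k)})) := by
  rw [xIdeal, Ideal.map_span, Ideal.map_span, Set.image_singleton, Set.image_singleton]

variable [Module.Flat (SNCModel k n) S]

theorem inf_xIdeal_bot : (Finset.univ.inf fun i : Fin n => xIdeal k n S i) = ⊥ := by
  classical
  rw [Finset.inf_congr rfl fun i _ => xIdeal_eq i, ← map_finset_inf_flat, snc_inf_R,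
    show Ideal.span {∏ i : Fin n, (X i : MvPolynomial (Fin n) k)} = sncIdeal k n from rfl,
    Ideal.map_quotient_self, Ideal.map_bot]

theorem key_S {T : Finset (Fin n)} {j : Fin n} (hj : j ∉ T) :
    (T.inf fun i => xIdeal k n S i ⊔ xIdeal k n S j) =
      xIdeal k n S j ⊔ T.inf fun i => xIdeal k n S i := by
  classical
  simp_rw [xIdeal_eq]
  simp_rw [← Ideal.map_sup]
  rw [← map_finset_inf_flat, snc_key_R hj, Ideal.map_sup, map_finset_inf_flat]

end SLevel

/-- for `S` flat over the simple normal crossings model, the map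
`S → ∏ᵢ S/Iᵢ` is injective with range the compatible tuples, i.e. `(S, Sᵢ, qᵢ)` is
fiber product data. -/
theorem statement1 (k : Type) [Field k] (n : ℕ) (hn : 1 ≤ n)
    (S : Type) [CommRing S] [Algebra (SNCModel k n) S] [Module.Flat (SNCModel k n) S] :
    Function.Injective (Pi.ringHom fun i : Fin n => Ideal.Quotient.mk (xIdeal k n S i)) ∧
      ∀ s : ∀ i : Fin n, S ⧸ xIdeal k n S i,
        (s ∈ Set.range (Pi.ringHom fun i : Fin n => Ideal.Quotient.mk (xIdeal k n S i)) ↔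
          ∀ i j : Fin n, i ≠ j →
            Ideal.Quotient.factor (S := xIdeal k n S i) (T := xIdeal k n S i ⊔ xIdeal k n S j)
                le_sup_left (s i) =
              Ideal.Quotient.factor (S := xIdeal k n S j) (T := xIdeal k n S i ⊔ xIdeal k n S j)
                le_sup_right (s j)) := by
  classical
  constructor
  · refine (injective_iff_map_eq_zero _).mpr fun a ha => ?_
    have h : a ∈ Finset.univ.inf fun i : Fin n => xIdeal k n S i :=
      Submodule.mem_finsetInf.mpr fun i _ =>
        Ideal.Quotient.eq_zero_iff_mem.mp (congrFun ha i)
    rw [inf_xIdeal_bot] at h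
    exact h
  · intro s
    constructor
    · rintro ⟨x, rfl⟩ i j hij
      show Ideal.Quotient.factor _ (Ideal.Quotient.mk _ x) =
        Ideal.Quotient.factor _ (Ideal.Quotient.mk _ x)
      rw [Ideal.Quotient.factor_mk, Ideal.Quotient.factor_mk]
    · intro hc
      have key : ∀ T : Finset (Fin n), ∃ x : S,
          ∀ i ∈ T, Ideal.Quotient.mk (xIdeal k n S i) x = s i := by
        intro T
        induction T using Finset.induction_on with
        | empty => exact ⟨0, fun i hi => absurd hi (Finset.notMem_empty i)⟩
        | @insert j T hj ih =>
            obtain ⟨x, hx⟩ := ih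
            obtain ⟨t, ht⟩ := Ideal.Quotient.mk_surjective (s j)
            have hd : t - x ∈ T.inf fun i => xIdeal k n S i ⊔ xIdeal k n S j := by
              rw [Submodule.mem_finsetInf]
              intro i hi
              have hij : i ≠ j := fun h => hj (h ▸ hi)
              have hcij := hc i j hij
              rw [← hx i hi, ← ht, Ideal.Quotient.factor_mk, Ideal.Quotient.factor_mk] at hcij
              exact (Ideal.Quotient.mk_eq_mk_iff_sub_mem t x).mp hcij.symm
            rw [key_S hj] at hd
            obtain ⟨a, ha, b, hb, hab⟩ := Submodule.mem_sup.mp hd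
            refine ⟨x + b, fun i hi => ?_⟩
            rcases Finset.mem_insert.mp hi with rfl | hiT
            · rw [show x + b = t - a from by rw [← sub_eq_of_eq_add' hab.symm]; ring,
                map_sub, ht, Ideal.Quotient.eq_zero_iff_mem.mpr ha, sub_zero]
            · rw [map_add, hx i hiT,
                Ideal.Quotient.eq_zero_iff_mem.mpr (Submodule.mem_finsetInf.mp hb i hiT),
                add_zero]
      obtain ⟨x, hx⟩ := key Finset.univ
      exact ⟨x, funext fun i => hx i (Finset.mem_univ i)⟩
end

section
/- The S-linear map M → ∏_{i=1}^{n} M/(IᵢM) induced by the quotient maps is injective, and its range consists exactly of the tuples (m̄ᵢ)ᵢ such that for all i ≠ j the images of m̄ᵢ and m̄ⱼ under the natural maps M/(IᵢM) → M/((Iᵢ+Iⱼ)M) and M/(IⱼM) → M/((Iᵢ+Iⱼ)M) coincide. -/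
open MvPolynomial

/-- The natural map `M ⧸ p → M ⧸ q` for submodules `p ≤ q`. -/
def qfactor {S : Type*} [CommRing S] {M : Type*} [AddCommGroup M] [Module S M]
    {p q : Submodule S M} (h : p ≤ q) : (M ⧸ p) →ₗ[S] M ⧸ q :=
  Submodule.mapQ p q LinearMap.id fun _ hx => h hx

open TensorProduct

lemma qfactor_mk {S : Type*} [CommRing S] {M : Type*} [AddCommGroup M] [Module S M]
    {p q : Submodule S M} (h : p ≤ q) (x : M) :
    qfactor h (Submodule.Quotient.mk x) = Submodule.Quotient.mk x := by
  simp [qfactor, Submodule.mapQ_apply]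

lemma mem_span_singleton_smul_top {S : Type*} [CommRing S] {M : Type*} [AddCommGroup M]
    [Module S M] (a : S) (m : M) :
    m ∈ Ideal.span {a} • (⊤ : Submodule S M) ↔ ∃ u, m = a • u := by
  constructor
  · intro h
    refine Submodule.smul_induction_on h (fun r hr n _ => ?_) ?_
    · obtain ⟨c, hc⟩ := Ideal.mem_span_singleton'.mp hr
      exact ⟨c • n, by rw [← hc, mul_comm, mul_smul]⟩
    · rintro x y ⟨u, rfl⟩ ⟨v, rfl⟩
      exact ⟨u + v, (smul_add _ _ _).symm⟩
  · rintro ⟨u, rfl⟩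
    exact Submodule.smul_mem_smul (Ideal.mem_span_singleton_self a) trivial

set_option maxHeartbeats 1000000 in
theorem core_glue {R : Type} [CommRing R] {ι : Type} [Fintype ι] [DecidableEq ι] (a : ι → R)
    (M : Type) [AddCommGroup M] [Module R M] [Module.Flat R M]
    (H1 : ∀ r : R, (∀ i, r ∈ Ideal.span {a i}) → r = 0)
    (H2 : ∀ r : ι → R, (∀ i j, r i - r j ∈ Ideal.span {a i} ⊔ Ideal.span {a j}) →
      ∃ r' : R, ∀ i, r' - r i ∈ Ideal.span {a i}) :
    (∀ m : M, (∀ i, ∃ u, m = a i • u) → m = 0) ∧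
    (∀ m : ι → M, (∀ i j, ∃ u v, m i - m j = a i • u + a j • v) →
      ∃ m', ∀ i, ∃ u, m' - m i = a i • u) := by
  classical
  set J : ι → Ideal R := fun i => Ideal.span {a i} with hJdef
  let d : R →ₗ[R] (∀ i, R ⧸ (J i : Submodule R R)) :=
    LinearMap.pi fun i => (J i : Submodule R R).mkQ
  let δ : (∀ i, R ⧸ (J i : Submodule R R)) →ₗ[R]
      (∀ p : ι × ι, R ⧸ ((J p.1 ⊔ J p.2 : Ideal R) : Submodule R R)) :=
    LinearMap.pi fun p =>
      qfactor (le_sup_left : (J p.1 : Submodule R R) ≤ (J p.1 ⊔ J p.2 : Ideal R)) ∘ₗ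
          LinearMap.proj p.1 -
        qfactor (le_sup_right : (J p.2 : Submodule R R) ≤ (J p.1 ⊔ J p.2 : Ideal R)) ∘ₗ
          LinearMap.proj p.2
  have hd_apply : ∀ (x : R) (i : ι), d x i = Submodule.Quotient.mk x := fun _ _ => rfl
  have hδ_apply : ∀ (y : ∀ i, R ⧸ (J i : Submodule R R)) (p : ι × ι),
      δ y p = qfactor le_sup_left (y p.1) - qfactor le_sup_right (y p.2) := fun _ _ => rfl
  have hd : Function.Injective d := by
    intro x y hxy
    have h0 : d (x - y) = 0 := by rw [map_sub, hxy, sub_self]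
    have hmem : ∀ i, x - y ∈ J i := by
      intro i
      have := congrFun h0 i
      rw [hd_apply] at this
      exact (Submodule.Quotient.mk_eq_zero _).mp this
    have := H1 _ hmem
    exact sub_eq_zero.mp this
  have hexact : Function.Exact d δ := by
    rw [LinearMap.exact_iff]
    ext y
    constructor
    · intro hy
      choose r hr using fun i => Submodule.Quotient.mk_surjective (J i : Submodule R R) (y i)
      have hcomp : ∀ i j, r i - r j ∈ J i ⊔ J j := by
        intro i j
        have h0 : δ y (i, j) = 0 := by
          rw [LinearMap.mem_ker] at hy; rw [hy]; rfl
        rw [hδ_apply] at h0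
        simp only at h0
        rw [← hr i, ← hr j, qfactor_mk, qfactor_mk] at h0
        rw [← Submodule.Quotient.mk_sub] at h0
        exact (Submodule.Quotient.mk_eq_zero _).mp h0
      obtain ⟨r', hr'⟩ := H2 r hcomp
      refine ⟨r', funext fun i => ?_⟩
      rw [hd_apply, ← hr i]
      exact (Submodule.Quotient.eq _).mpr (hr' i)
    · rintro ⟨x, rfl⟩
      rw [LinearMap.mem_ker]
      funext p
      rw [hδ_apply, hd_apply, hd_apply, qfactor_mk, qfactor_mk, sub_self]
      rfl
  have hd' : Function.Injective (d.lTensor M) :=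
    Module.Flat.lTensor_preserves_injective_linearMap d hd
  have hex' : Function.Exact (d.lTensor M) (δ.lTensor M) :=
    Module.Flat.lTensor_exact M hexact
  constructor
  · -- injectivity
    intro m hm
    choose u hu using hm
    have key : d.lTensor M (m ⊗ₜ[R] (1 : R)) = 0 := by
      rw [LinearMap.lTensor_tmul]
      rw [← Finset.univ_sum_single (d 1), tmul_sum]
      refine Finset.sum_eq_zero fun i _ => ?_
      rw [hd_apply, hu i, smul_tmul, ← Pi.single_smul]
      have : (a i • (Submodule.Quotient.mk 1 : R ⧸ (J i : Submodule R R))) = 0 := by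
        rw [← Submodule.Quotient.mk_smul, smul_eq_mul, mul_one]
        exact (Submodule.Quotient.mk_eq_zero _).mpr (Ideal.mem_span_singleton_self (a i))
      rw [this, Pi.single_zero, tmul_zero]
    have h0 : (m ⊗ₜ[R] (1 : R) : M ⊗[R] R) = 0 := by
      apply hd'
      rw [key, map_zero]
    have := congrArg (TensorProduct.rid R M) h0
    simpa using this
  · -- gluing
    intro m hm
    choose u v huv using hm
    set q1 : ∀ i, R ⧸ (J i : Submodule R R) := fun i => Submodule.Quotient.mk 1 with hq1
    set t : M ⊗[R] (∀ i, R ⧸ (J i : Submodule R R)) :=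
      ∑ i, m i ⊗ₜ[R] Pi.single i (q1 i) with ht_def
    have ht : δ.lTensor M t = 0 := by
      rw [ht_def, map_sum]
      simp_rw [LinearMap.lTensor_tmul]
      have expand : ∀ i : ι, m i ⊗ₜ[R] δ (Pi.single i (q1 i)) =
          ∑ p : ι × ι, m i ⊗ₜ[R] Pi.single p (δ (Pi.single i (q1 i)) p) := by
        intro i
        rw [← tmul_sum, Finset.univ_sum_single]
      rw [Finset.sum_congr rfl fun i _ => expand i, Finset.sum_comm]
      refine Finset.sum_eq_zero fun p _ => ?_
      obtain ⟨j, l⟩ := p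
      have hcomp : ∀ i : ι, δ (Pi.single i (q1 i)) (j, l) =
          (if j = i then Submodule.Quotient.mk (1 : R) else 0) -
          (if l = i then Submodule.Quotient.mk (1 : R) else 0) := by
        intro i
        rw [hδ_apply]
        have e1 : Pi.single (M := fun i => R ⧸ (J i : Submodule R R)) i (q1 i) j =
            if j = i then Submodule.Quotient.mk (1 : R) else 0 := by
          rcases eq_or_ne j i with h | h
          · subst h; simp [hq1]
          · simp [Pi.single_eq_of_ne h, h]
        have e2 : Pi.single (M := fun i => R ⧸ (J i : Submodule R R)) i (q1 i) l =
            if l = i then Submodule.Quotient.mk (1 : R) else 0 := by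
          rcases eq_or_ne l i with h | h
          · subst h; simp [hq1]
          · simp [Pi.single_eq_of_ne h, h]
        rw [show ((j, l) : ι × ι).1 = j from rfl, show ((j, l) : ι × ι).2 = l from rfl, e1, e2]
        split_ifs <;> simp only [qfactor_mk, map_zero, sub_self, sub_zero, zero_sub]
      simp_rw [hcomp]
      have split : ∀ i : ι,
          (m i ⊗ₜ[R] Pi.single (M := fun p : ι × ι => R ⧸ ((J p.1 ⊔ J p.2 : Ideal R) : Submodule R R)) (j, l)
            ((if j = i then Submodule.Quotient.mk (1 : R) else 0) -
             (if l = i then Submodule.Quotient.mk (1 : R) else 0))) =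
          (if j = i then m i ⊗ₜ[R] Pi.single (M := fun p : ι × ι => R ⧸ ((J p.1 ⊔ J p.2 : Ideal R) : Submodule R R)) (j, l) (Submodule.Quotient.mk (1 : R)) else 0) -
          (if l = i then m i ⊗ₜ[R] Pi.single (M := fun p : ι × ι => R ⧸ ((J p.1 ⊔ J p.2 : Ideal R) : Submodule R R)) (j, l) (Submodule.Quotient.mk (1 : R)) else 0) := by
        intro i
        split_ifs <;>
          simp [Pi.single_sub, tmul_sub, Pi.single_neg, tmul_neg]
      rw [Finset.sum_congr rfl fun i _ => split i, Finset.sum_sub_distrib,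
        Finset.sum_ite_eq, Finset.sum_ite_eq]
      simp only [Finset.mem_univ, if_true]
      rw [← sub_tmul, huv j l, add_tmul, smul_tmul, smul_tmul, ← Pi.single_smul, ← Pi.single_smul]
      have hz1 : (a j • (Submodule.Quotient.mk 1 :
          R ⧸ ((J j ⊔ J l : Ideal R) : Submodule R R))) = 0 := by
        rw [← Submodule.Quotient.mk_smul, smul_eq_mul, mul_one]
        exact (Submodule.Quotient.mk_eq_zero _).mpr
          (Ideal.mem_sup_left (Ideal.mem_span_singleton_self (a j)))
      have hz2 : (a l • (Submodule.Quotient.mk 1 :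
          R ⧸ ((J j ⊔ J l : Ideal R) : Submodule R R))) = 0 := by
        rw [← Submodule.Quotient.mk_smul, smul_eq_mul, mul_one]
        exact (Submodule.Quotient.mk_eq_zero _).mpr
          (Ideal.mem_sup_right (Ideal.mem_span_singleton_self (a l)))
      rw [hz1, hz2]
      simp
    obtain ⟨s, hs⟩ := (hex' t).mp ht
    set m' : M := TensorProduct.rid R M s with hm'
    have hs' : s = m' ⊗ₜ[R] (1 : R) := by
      rw [hm', ← TensorProduct.rid_symm_apply, LinearEquiv.symm_apply_apply]
    refine ⟨m', fun i => ?_⟩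
    have hdm : d.lTensor M (m' ⊗ₜ[R] (1 : R)) = t := by rw [← hs', hs]
    rw [LinearMap.lTensor_tmul] at hdm
    have hproj := congrArg ((LinearMap.proj i :
      (∀ i, R ⧸ (J i : Submodule R R)) →ₗ[R] R ⧸ (J i : Submodule R R)).lTensor M) hdm
    rw [LinearMap.lTensor_tmul] at hproj
    have hl : (LinearMap.proj i :
        (∀ i, R ⧸ (J i : Submodule R R)) →ₗ[R] R ⧸ (J i : Submodule R R)) (d 1) =
        (Submodule.Quotient.mk 1 : R ⧸ (J i : Submodule R R)) := rfl
    rw [hl] at hproj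
    have hrhs : (LinearMap.proj i : (∀ i, R ⧸ (J i : Submodule R R)) →ₗ[R] _).lTensor M t =
        m i ⊗ₜ[R] (Submodule.Quotient.mk 1 : R ⧸ (J i : Submodule R R)) := by
      rw [ht_def, map_sum]
      simp_rw [LinearMap.lTensor_tmul]
      have : ∀ j : ι, (LinearMap.proj i :
            (∀ i, R ⧸ (J i : Submodule R R)) →ₗ[R] R ⧸ (J i : Submodule R R))
            (Pi.single (M := fun i => R ⧸ (J i : Submodule R R)) j (q1 j)) =
          if i = j then (Submodule.Quotient.mk 1 : R ⧸ (J i : Submodule R R)) else 0 := by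
        intro j
        by_cases h : i = j
        · subst h; simp [hq1]
        · simp [Pi.single_eq_of_ne (Ne.symm h), h]
      simp_rw [this]
      have hsplit : ∀ j : ι, (m j ⊗ₜ[R]
          (if i = j then (Submodule.Quotient.mk 1 : R ⧸ (J i : Submodule R R)) else 0)) =
          if i = j then m j ⊗ₜ[R]
            (Submodule.Quotient.mk 1 : R ⧸ (J i : Submodule R R)) else 0 := by
        intro j
        split_ifs <;> simp [tmul_zero]
      simp_rw [hsplit]
      rw [Finset.sum_ite_eq, if_pos (Finset.mem_univ i)]
    rw [hrhs] at hproj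
    have hsub : ((m' - m i) ⊗ₜ[R]
        (Submodule.Quotient.mk 1 : R ⧸ (J i : Submodule R R))) = 0 := by
      rw [sub_tmul, hproj, sub_self]
    have happ := congrArg (TensorProduct.tensorQuotEquivQuotSMul M (J i)) hsub
    rw [map_zero, Ideal.Quotient.mk_eq_mk,
      TensorProduct.tensorQuotEquivQuotSMul_tmul_mk, one_smul] at happ
    have hmem := (Submodule.Quotient.mk_eq_zero _).mp happ
    exact (mem_span_singleton_smul_top (a i) _).mp hmem

section PolyLemmas
variable {k : Type} [Field k] {n : ℕ}

lemma mem_span_X_iff (i : Fin n) (f : MvPolynomial (Fin n) k) :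
    f ∈ Ideal.span {(X i : MvPolynomial (Fin n) k)} ↔ ∀ m ∈ f.support, m i ≠ 0 := by
  have h : ({(X i : MvPolynomial (Fin n) k)} : Set _) = X '' ({i} : Set (Fin n)) := by simp
  rw [h, mem_ideal_span_X_image]; simp

lemma mem_span_X_pair_iff (i j : Fin n) (f : MvPolynomial (Fin n) k) :
    f ∈ Ideal.span {(X i : MvPolynomial (Fin n) k), X j} ↔
      ∀ m ∈ f.support, m i ≠ 0 ∨ m j ≠ 0 := by
  have h : ({(X i : MvPolynomial (Fin n) k), X j} : Set _) = X '' ({i, j} : Set (Fin n)) := by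
    rw [Set.image_pair]
  rw [h, mem_ideal_span_X_image]
  constructor
  · intro H m hm
    obtain ⟨l, hl, hlne⟩ := H m hm
    rcases hl with rfl | rfl
    · exact Or.inl hlne
    · exact Or.inr hlne
  · intro H m hm
    rcases H m hm with h' | h'
    · exact ⟨i, Or.inl rfl, h'⟩
    · exact ⟨j, Or.inr rfl, h'⟩

lemma mem_sncIdeal_iff (f : MvPolynomial (Fin n) k) :
    f ∈ sncIdeal k n ↔ ∀ m ∈ f.support, ∀ i, m i ≠ 0 := by
  have h : ({(∏ i : Fin n, (X i : MvPolynomial (Fin n) k))} : Set _) =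
      (fun s => (monomial s 1 : MvPolynomial (Fin n) k)) ''
        ({∑ i : Fin n, Finsupp.single i 1} : Set (Fin n →₀ ℕ)) := by
    rw [Set.image_singleton]
    rw [show (monomial (∑ i : Fin n, Finsupp.single i 1) 1 : MvPolynomial (Fin n) k)
        = ∏ i : Fin n, X i by rw [monomial_sum_one]; rfl]
  rw [sncIdeal, h, mem_ideal_span_monomial_image]
  have hd : ∀ (m : Fin n →₀ ℕ), ((∑ i : Fin n, Finsupp.single i 1) ≤ m ↔ ∀ i, m i ≠ 0) := by
    intro m
    rw [Finsupp.le_def]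
    have hcoe : ∀ l : Fin n, (∑ i : Fin n, Finsupp.single i 1) l = 1 := by
      intro l
      rw [Finsupp.finset_sum_apply]
      simp [Finsupp.single_apply]
    constructor
    · intro H i
      have := H i; rw [hcoe i] at this; omega
    · intro H l
      rw [hcoe l]; exact Nat.one_le_iff_ne_zero.mpr (H l)
  constructor
  · intro H m hm i
    obtain ⟨s, hs, hle⟩ := H m hm
    rcases hs with rfl
    exact (hd m).mp hle i
  · intro H m hm
    exact ⟨_, rfl, (hd m).mpr (H m hm)⟩

lemma snc_le_span_X (hn : 1 ≤ n) (i : Fin n) :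
    sncIdeal k n ≤ Ideal.span {(X i : MvPolynomial (Fin n) k)} := by
  rw [Ideal.span_le, Set.singleton_subset_iff]
  exact Ideal.mem_span_singleton.mpr (Finset.dvd_prod_of_mem _ (Finset.mem_univ i))

/-- H1 over the snc model. -/
lemma snc_H1 (hn : 1 ≤ n)
    (r : SNCModel k n)
    (hr : ∀ i : Fin n, r ∈ Ideal.span {Ideal.Quotient.mk (sncIdeal k n) (X i)}) : r = 0 := by
  obtain ⟨f, rfl⟩ := Ideal.Quotient.mk_surjective r
  have hf : ∀ i : Fin n, f ∈ Ideal.span {(X i : MvPolynomial (Fin n) k)} := by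
    intro i
    have h1 : Ideal.span {Ideal.Quotient.mk (sncIdeal k n) (X i)} =
        Ideal.map (Ideal.Quotient.mk (sncIdeal k n))
          (Ideal.span {(X i : MvPolynomial (Fin n) k)}) := by
      rw [Ideal.map_span, Set.image_singleton]
    have := hr i
    rw [h1, Ideal.mem_quotient_iff_mem_sup,
        sup_eq_left.mpr (snc_le_span_X hn i)] at this
    exact this
  rw [Ideal.Quotient.eq_zero_iff_mem, mem_sncIdeal_iff]
  intro m hm i
  exact (mem_span_X_iff i f).mp (hf i) m hm

/-- H2 over the snc model. -/
lemma snc_H2 (hn : 1 ≤ n)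
    (r : Fin n → SNCModel k n)
    (hr : ∀ i j, r i - r j ∈ Ideal.span {Ideal.Quotient.mk (sncIdeal k n) (X i)} ⊔
      Ideal.span {Ideal.Quotient.mk (sncIdeal k n) (X j)}) :
    ∃ r' : SNCModel k n, ∀ i,
      r' - r i ∈ Ideal.span {Ideal.Quotient.mk (sncIdeal k n) (X i)} := by
  classical
  choose f hf using fun i => Ideal.Quotient.mk_surjective (r i)
  have hpair : ∀ i j, f i - f j ∈ Ideal.span {(X i : MvPolynomial (Fin n) k), X j} := by
    intro i j
    have h1 : Ideal.span {Ideal.Quotient.mk (sncIdeal k n) (X i)} ⊔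
        Ideal.span {Ideal.Quotient.mk (sncIdeal k n) (X j)} =
        Ideal.map (Ideal.Quotient.mk (sncIdeal k n))
          (Ideal.span {(X i : MvPolynomial (Fin n) k), X j}) := by
      rw [show ({(X i : MvPolynomial (Fin n) k), X j} : Set _) = {X i} ∪ {X j} by rfl,
        Ideal.span_union, Ideal.map_sup, Ideal.map_span, Ideal.map_span,
        Set.image_singleton, Set.image_singleton]
    have h2 : sncIdeal k n ≤ Ideal.span {(X i : MvPolynomial (Fin n) k), X j} := by
      refine le_trans (snc_le_span_X hn i) (Ideal.span_mono ?_)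
      intro x hx; rcases hx with rfl; exact Set.mem_insert _ _
    have := hr i j
    rw [h1] at this
    rw [show r i - r j = Ideal.Quotient.mk (sncIdeal k n) (f i - f j) by
      rw [map_sub, hf i, hf j]] at this
    rw [Ideal.mem_quotient_iff_mem_sup, sup_eq_left.mpr h2] at this
    exact this
  -- construct the glued polynomial
  set T : Finset (Fin n →₀ ℕ) := Finset.univ.biUnion (fun i => (f i).support) with hT
  set c : (Fin n →₀ ℕ) → k := fun m =>
    if h : ∃ i, m i = 0 then coeff m (f h.choose) else 0 with hc
  set g : MvPolynomial (Fin n) k := ∑ m ∈ T, monomial m (c m) with hg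
  have hgcoeff : ∀ m, coeff m g = if m ∈ T then c m else 0 := by
    intro m
    rw [hg, coeff_sum]
    simp_rw [coeff_monomial]
    rw [Finset.sum_ite_eq' T m c]
  have hkey : ∀ i, g - f i ∈ Ideal.span {(X i : MvPolynomial (Fin n) k)} := by
    intro i
    rw [mem_span_X_iff]
    intro m hm
    by_contra hmi
    apply mem_support_iff.mp hm
    rw [coeff_sub, hgcoeff m]
    have hex : ∃ j, m j = 0 := ⟨i, hmi⟩
    have hchoice : m hex.choose = 0 := hex.choose_spec
    have hagree : coeff m (f hex.choose) = coeff m (f i) := by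
      have := hpair hex.choose i
      rw [mem_span_X_pair_iff] at this
      by_contra hne
      have hmem : m ∈ (f hex.choose - f i).support := by
        rw [mem_support_iff, coeff_sub]
        exact sub_ne_zero_of_ne hne
      rcases this m hmem with h' | h'
      · exact h' hchoice
      · exact h' hmi
    by_cases hmT : m ∈ T
    · rw [if_pos hmT, hc]
      simp only [dif_pos hex]
      rw [hagree, sub_self]
    · rw [if_neg hmT]
      have : coeff m (f i) = 0 := by
        by_contra h'
        exact hmT (Finset.mem_biUnion.mpr ⟨i, Finset.mem_univ i, mem_support_iff.mpr h'⟩)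
      rw [this, sub_zero]
  refine ⟨Ideal.Quotient.mk (sncIdeal k n) g, fun i => ?_⟩
  rw [show Ideal.Quotient.mk (sncIdeal k n) g - r i =
      Ideal.Quotient.mk (sncIdeal k n) (g - f i) by rw [map_sub, hf i]]
  rw [show Ideal.span {Ideal.Quotient.mk (sncIdeal k n) (X i)} =
      Ideal.map (Ideal.Quotient.mk (sncIdeal k n))
        (Ideal.span {(X i : MvPolynomial (Fin n) k)}) by
    rw [Ideal.map_span, Set.image_singleton]]
  exact Ideal.mem_map_of_mem _ (hkey i)

end PolyLemmas

set_option maxHeartbeats 1000000 in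
/-- for a finite projective module `M` over an algebra `S` flat over the
simple normal crossings model, the map `M → ∏ᵢ M/IᵢM` is injective with range the
compatible tuples. -/
theorem statement2 (k : Type) [Field k] (n : ℕ) (hn : 1 ≤ n)
    (S : Type) [CommRing S] [Algebra (SNCModel k n) S] [Module.Flat (SNCModel k n) S]
    (M : Type) [AddCommGroup M] [Module S M] [Module.Finite S M] [Module.Projective S M] :
    Function.Injective
        (LinearMap.pi fun i : Fin n =>
          Submodule.mkQ (xIdeal k n S i • (⊤ : Submodule S M))) ∧
      ∀ p : ∀ i : Fin n, M ⧸ xIdeal k n S i • (⊤ : Submodule S M),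
        (p ∈ LinearMap.range
              (LinearMap.pi fun i : Fin n =>
                Submodule.mkQ (xIdeal k n S i • (⊤ : Submodule S M))) ↔
          ∀ i j : Fin n, i ≠ j →
            qfactor (Submodule.smul_mono_left
                (le_sup_left : xIdeal k n S i ≤ xIdeal k n S i ⊔ xIdeal k n S j)) (p i) =
              qfactor (Submodule.smul_mono_left
                (le_sup_right : xIdeal k n S j ≤ xIdeal k n S i ⊔ xIdeal k n S j)) (p j)) := by
  classical
  letI : Module (SNCModel k n) M := Module.compHom M (algebraMap (SNCModel k n) S)
  haveI : IsScalarTower (SNCModel k n) S M :=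
    IsScalarTower.of_algebraMap_smul fun r x => rfl
  haveI : Module.Flat (SNCModel k n) M := Module.Flat.trans (SNCModel k n) S M
  set a : Fin n → SNCModel k n := fun i => Ideal.Quotient.mk (sncIdeal k n) (X i) with ha
  obtain ⟨C1, C2⟩ := core_glue a M (snc_H1 hn) (snc_H2 hn)
  have hmem : ∀ (i : Fin n) (z : M),
      z ∈ xIdeal k n S i • (⊤ : Submodule S M) ↔ ∃ u : M, z = a i • u := by
    intro i z
    rw [xIdeal, mem_span_singleton_smul_top]
    constructor
    · rintro ⟨u, rfl⟩; exact ⟨u, by rw [algebraMap_smul]⟩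
    · rintro ⟨u, rfl⟩; exact ⟨u, by rw [algebraMap_smul]⟩
  constructor
  · intro x y hxy
    have hx : ∀ i, x - y ∈ xIdeal k n S i • (⊤ : Submodule S M) := by
      intro i
      have h := congrFun hxy i
      simp only [LinearMap.pi_apply, Submodule.mkQ_apply] at h
      exact (Submodule.Quotient.eq _).mp h
    have h0 : x - y = 0 := C1 (x - y) fun i => (hmem i _).mp (hx i)
    exact sub_eq_zero.mp h0
  · intro p
    constructor
    · rintro ⟨x, rfl⟩ i j hij
      simp only [LinearMap.pi_apply, Submodule.mkQ_apply, qfactor_mk]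
    · intro hp
      choose mfun hmfun using fun i =>
        Submodule.Quotient.mk_surjective (xIdeal k n S i • (⊤ : Submodule S M)) (p i)
      have hcompat : ∀ i j, ∃ u v : M, mfun i - mfun j = a i • u + a j • v := by
        intro i j
        rcases eq_or_ne i j with rfl | hij
        · exact ⟨0, 0, by simp⟩
        · have h := hp i j hij
          rw [← hmfun i, ← hmfun j, qfactor_mk, qfactor_mk] at h
          have hmem2 : mfun i - mfun j ∈
              (xIdeal k n S i ⊔ xIdeal k n S j) • (⊤ : Submodule S M) := by
            have := (Submodule.Quotient.eq _).mp h
            exact this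
          rw [Submodule.sup_smul] at hmem2
          obtain ⟨y, hy, z, hz, hyz⟩ := Submodule.mem_sup.mp hmem2
          obtain ⟨u, hu⟩ := (hmem i y).mp hy
          obtain ⟨v, hv⟩ := (hmem j z).mp hz
          exact ⟨u, v, by rw [← hyz, hu, hv]⟩
      obtain ⟨m', hm'⟩ := C2 mfun hcompat
      refine ⟨m', funext fun i => ?_⟩
      rw [LinearMap.pi_apply, Submodule.mkQ_apply, ← hmfun i]
      apply (Submodule.Quotient.eq _).mpr
      exact (hmem i _).mpr (hm' i)
end

section
/- Assume n ≥ 2. Let Fₙ ⊆ ∏_{i=1}^{n} Sᵢ be the subring of compatible tuples (tuples (sᵢ) whose entries agree pairwise in S_{ij}), and let F = F_{n-1} ⊆ ∏_{i=1}^{n-1} Sᵢ be the subring of compatible tuples in the first n−1 factors; F is an S-algebra via the map s ↦ (qᵢ(s))_{i<n}. Then the map Fₙ → F × Sₙ sending (s₁,…,sₙ) ↦ ((s₁,…,s_{n-1}), sₙ) is an injective ring homomorphism whose range is exactly the set of pairs (f, t) ∈ F × Sₙ such that 1 ⊗ f = t ⊗ 1 in the ring Sₙ ⊗_S F. In other words,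 the natural maps induce a ring isomorphism S₁ ×_q ⋯ ×_q Sₙ ≅ (S₁ ×_q ⋯ ×_q S_{n-1}) ×_{q'} Sₙ. -/
set_option maxHeartbeats 1000000
set_option synthInstance.maxHeartbeats 400000

open MvPolynomial TensorProduct

/-- `Ideal.Quotient.factor` as an `S`-algebra homomorphism. -/
def factorAlgHom {S : Type*} [CommRing S] (I J : Ideal S) (h : I ≤ J) :
    (S ⧸ I) →ₐ[S] S ⧸ J :=
  { Ideal.Quotient.factor h with
    commutes' := fun s => by
      simp [Ideal.Quotient.algebraMap_eq, RingHom.toMonoidHom_eq_coe] }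

variable (k : Type) [Field k] (n : ℕ) (S : Type) [CommRing S] [Algebra (SNCModel k n) S]

/-- The subalgebra of compatible tuples `(sᵢ)ᵢ` in `∏_{i ∈ ι} S/I_{e i}`: tuples whose
entries agree pairwise in `S/(I_{e i} + I_{e j})`. -/
def compatAlg {ι : Type} (e : ι → Fin n) :
    Subalgebra S (∀ i : ι, S ⧸ xIdeal k n S (e i)) :=
  ⨅ (i : ι) (j : ι) (_ : i ≠ j),
    AlgHom.equalizer
      ((factorAlgHom (xIdeal k n S (e i)) (xIdeal k n S (e i) ⊔ xIdeal k n S (e j))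
          le_sup_left).comp (Pi.evalAlgHom S (fun i : ι => S ⧸ xIdeal k n S (e i)) i))
      ((factorAlgHom (xIdeal k n S (e j)) (xIdeal k n S (e i) ⊔ xIdeal k n S (e j))
          le_sup_right).comp (Pi.evalAlgHom S (fun i : ι => S ⧸ xIdeal k n S (e i)) j))

variable (m : ℕ) [Algebra (SNCModel k (m + 1)) S]

/-- Restriction of a compatible `(m+1)`-tuple to its first `m` coordinates. -/
noncomputable def restrictAlgHom :
    compatAlg k (m + 1) S (id : Fin (m + 1) → Fin (m + 1)) →ₐ[S]
      compatAlg k (m + 1) S (Fin.castSucc : Fin m → Fin (m + 1)) :=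
  AlgHom.codRestrict
    (Pi.algHom S _ fun i : Fin m =>
      (Pi.evalAlgHom S (fun j : Fin (m + 1) => S ⧸ xIdeal k (m + 1) S (id j))
        i.castSucc).comp
        (compatAlg k (m + 1) S (id : Fin (m + 1) → Fin (m + 1))).val)
    (compatAlg k (m + 1) S (Fin.castSucc : Fin m → Fin (m + 1)))
    (by
      intro x
      have hx := x.2
      simp only [compatAlg, Algebra.mem_iInf] at hx ⊢
      intro i j hij
      have h := hx i.castSucc j.castSucc ((Fin.castSucc_injective m).ne hij)
      rw [AlgHom.mem_equalizer] at h ⊢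
      first
        | simpa using h
        | exact h)

/-- Evaluation of a compatible `(m+1)`-tuple at the last coordinate. -/
noncomputable def lastAlgHom :
    compatAlg k (m + 1) S (id : Fin (m + 1) → Fin (m + 1)) →ₐ[S]
      S ⧸ xIdeal k (m + 1) S (Fin.last m) :=
  (Pi.evalAlgHom S (fun j : Fin (m + 1) => S ⧸ xIdeal k (m + 1) S (id j))
      (Fin.last m)).comp
    (compatAlg k (m + 1) S (id : Fin (m + 1) → Fin (m + 1))).val

/-- The ring homomorphism `S₁ ×_q ⋯ ×_q Sₙ → (S₁ ×_q ⋯ ×_q S_{n-1}) × Sₙ`,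
`(s₁,…,sₙ) ↦ ((s₁,…,s_{n-1}), sₙ)`. -/
noncomputable def hierarchicalHom :
    compatAlg k (m + 1) S (id : Fin (m + 1) → Fin (m + 1)) →+*
      (compatAlg k (m + 1) S (Fin.castSucc : Fin m → Fin (m + 1))) ×
        (S ⧸ xIdeal k (m + 1) S (Fin.last m)) :=
  RingHom.prod (restrictAlgHom k S m).toRingHom (lastAlgHom k S m).toRingHom

lemma aux_poly_colon (k : Type) [Field k] {n : ℕ} (i j l : Fin n) (hli : l ≠ i) (hlj : l ≠ j)
    (F : MvPolynomial (Fin n) k)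
    (h : X l * F ∈ Ideal.span ({X i, X j} : Set (MvPolynomial (Fin n) k))) :
    F ∈ Ideal.span ({X i, X j} : Set (MvPolynomial (Fin n) k)) := by
  classical
  set φ : MvPolynomial (Fin n) k →ₐ[k] MvPolynomial (Fin n) k :=
    aeval (fun t => if t = i ∨ t = j then 0 else X t) with hφ
  have hsub : ∀ G : MvPolynomial (Fin n) k, G - φ G ∈ Ideal.span ({X i, X j} : Set _) := by
    intro G
    induction G using MvPolynomial.induction_on with
    | C a => simp [hφ]
    | add p q hp hq =>
      have : p + q - φ (p + q) = (p - φ p) + (q - φ q) := by rw [map_add]; ring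
      rw [this]; exact add_mem hp hq
    | mul_X p t hp =>
      rw [map_mul, aeval_X]
      by_cases ht : t = i ∨ t = j
      · rw [if_pos ht, mul_zero, sub_zero]
        have hX : X t ∈ Ideal.span ({X i, X j} : Set (MvPolynomial (Fin n) k)) := by
          rcases ht with h1 | h1 <;> subst h1 <;>
            exact Ideal.subset_span (by simp)
        exact Ideal.mul_mem_left _ _ hX
      · rw [if_neg ht]
        have : p * X t - φ p * X t = (p - φ p) * X t := by ring
        rw [this]
        exact Ideal.mul_mem_right _ _ hp
  have hzero : ∀ G ∈ Ideal.span ({X i, X j} : Set (MvPolynomial (Fin n) k)), φ G = 0 := by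
    intro G hG
    obtain ⟨a, b, rfl⟩ := Ideal.mem_span_pair.mp hG
    simp [hφ]
  have h0 : φ (X l * F) = 0 := hzero _ h
  rw [map_mul, aeval_X, if_neg (by tauto)] at h0
  have hF0 : φ F = 0 := by
    rcases mul_eq_zero.mp h0 with h1 | h1
    · exact absurd h1 (X_ne_zero l)
    · exact h1
  have := hsub F
  rwa [hF0, sub_zero] at this

lemma aux_snc_colon (k : Type) [Field k] {n : ℕ} (i j l : Fin n) (hli : l ≠ i) (hlj : l ≠ j)
    (f : SNCModel k n)
    (h : Ideal.Quotient.mk (sncIdeal k n) (X l) * f ∈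
      Ideal.span ({Ideal.Quotient.mk (sncIdeal k n) (X i),
        Ideal.Quotient.mk (sncIdeal k n) (X j)} : Set (SNCModel k n))) :
    f ∈ Ideal.span ({Ideal.Quotient.mk (sncIdeal k n) (X i),
      Ideal.Quotient.mk (sncIdeal k n) (X j)} : Set (SNCModel k n)) := by
  classical
  set mkh := Ideal.Quotient.mk (sncIdeal k n) with hmkh
  set JA : Ideal (MvPolynomial (Fin n) k) := Ideal.span ({X i, X j} : Set _) with hJA
  have hmap : Ideal.span ({mkh (X i), mkh (X j)} : Set (SNCModel k n)) = JA.map mkh := by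
    rw [hJA, Ideal.map_span, Set.image_pair]
  have hker : sncIdeal k n ≤ JA := by
    rw [Ideal.span_le, Set.singleton_subset_iff]
    have hXi : (X i : MvPolynomial (Fin n) k) ∈ JA := Ideal.subset_span (by simp)
    have : (∏ t : Fin n, (X t : MvPolynomial (Fin n) k)) =
        X i * ∏ t ∈ Finset.univ.erase i, X t :=
      (Finset.mul_prod_erase Finset.univ _ (Finset.mem_univ i)).symm
    rw [SetLike.mem_coe, this]
    exact Ideal.mul_mem_right _ _ hXi
  have key : ∀ g : MvPolynomial (Fin n) k, mkh g ∈ JA.map mkh ↔ g ∈ JA := by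
    intro g
    constructor
    · intro hg
      obtain ⟨x, hx, he⟩ :=
        (Ideal.mem_map_iff_of_surjective mkh Ideal.Quotient.mk_surjective).mp hg
      have hsub : g - x ∈ sncIdeal k n := Ideal.Quotient.eq.mp he.symm
      have : g = x + (g - x) := by ring
      rw [this]
      exact JA.add_mem hx (hker hsub)
    · exact fun hg => Ideal.mem_map_of_mem _ hg
  obtain ⟨F, rfl⟩ := Ideal.Quotient.mk_surjective f
  rw [hmap] at h ⊢
  rw [← map_mul, key] at h
  exact (key F).mpr (aux_poly_colon k i j l hli hlj F h)

lemma aux_key_reg (k : Type) [Field k] {n : ℕ} (S : Type) [CommRing S]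
    [Algebra (SNCModel k n) S] [Module.Flat (SNCModel k n) S]
    (i j l : Fin n) (hij : i ≠ j) (hli : l ≠ i) (hlj : l ≠ j) (s : S)
    (h : algebraMap (SNCModel k n) S (Ideal.Quotient.mk (sncIdeal k n) (X l)) * s ∈
      xIdeal k n S i ⊔ xIdeal k n S j) :
    s ∈ xIdeal k n S i ⊔ xIdeal k n S j := by
  classical
  set r : SNCModel k n := Ideal.Quotient.mk (sncIdeal k n) (X l) with hr
  set J : Ideal (SNCModel k n) := Ideal.span ({Ideal.Quotient.mk (sncIdeal k n) (X i),
    Ideal.Quotient.mk (sncIdeal k n) (X j)} : Set (SNCModel k n)) with hJ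
  have hsup : xIdeal k n S i ⊔ xIdeal k n S j = J.map (algebraMap (SNCModel k n) S) := by
    rw [hJ, Ideal.map_span, Set.image_pair]
    unfold xIdeal
    rw [← Ideal.span_insert]
  have hmem : ∀ x : S, x ∈ xIdeal k n S i ⊔ xIdeal k n S j ↔
      x ∈ (J • ⊤ : Submodule (SNCModel k n) S) := by
    intro x
    rw [hsup, Ideal.smul_top_eq_map, Submodule.restrictScalars_mem]
  have hμ : Function.Injective
      ((LinearMap.lsmul (SNCModel k n) (SNCModel k n ⧸ J)) r) := by
    intro x y hxy
    obtain ⟨a, rfl⟩ := Ideal.Quotient.mk_surjective x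
    obtain ⟨b, rfl⟩ := Ideal.Quotient.mk_surjective y
    have hxy' : Ideal.Quotient.mk J (r * a) = Ideal.Quotient.mk J (r * b) := by
      exact hxy
    have hd : r * a - r * b ∈ J := Ideal.Quotient.eq.mp hxy'
    have hd' : r * (a - b) ∈ J := by rwa [mul_sub]
    have := aux_snc_colon k i j l hli hlj (a - b) hd'
    exact Ideal.Quotient.eq.mpr this
  have hT : Function.Injective
      (((LinearMap.lsmul (SNCModel k n) (SNCModel k n ⧸ J)) r).lTensor S) :=
    Module.Flat.lTensor_preserves_injective_linearMap _ hμ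
  set e := TensorProduct.tensorQuotEquivQuotSMul S J with he
  rw [hmem] at h ⊢
  have h1 : (r • s : S) ∈ (J • ⊤ : Submodule (SNCModel k n) S) := by
    have h2 : r • s = algebraMap (SNCModel k n) S r * s := Algebra.smul_def r s
    rw [h2]; exact h
  have h2 : s ⊗ₜ[SNCModel k n] (Ideal.Quotient.mk J r)
      = (0 : S ⊗[SNCModel k n] (SNCModel k n ⧸ J)) := by
    apply e.injective
    rw [map_zero, he, TensorProduct.tensorQuotEquivQuotSMul_tmul_mk]
    exact (Submodule.Quotient.mk_eq_zero _).mpr h1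
  have h3 : ((LinearMap.lsmul (SNCModel k n) (SNCModel k n ⧸ J)) r).lTensor S
      (s ⊗ₜ[SNCModel k n] Ideal.Quotient.mk J 1) = 0 := by
    rw [LinearMap.lTensor_tmul, LinearMap.lsmul_apply]
    have h4 : r • (Ideal.Quotient.mk J 1 : SNCModel k n ⧸ J) = Ideal.Quotient.mk J r := by
      rw [← Ideal.Quotient.mk_eq_mk, ← Submodule.Quotient.mk_smul, smul_eq_mul, mul_one,
        Ideal.Quotient.mk_eq_mk]
    rw [h4, h2]
  have h4 : s ⊗ₜ[SNCModel k n] (Ideal.Quotient.mk J 1)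
      = (0 : S ⊗[SNCModel k n] (SNCModel k n ⧸ J)) := by
    apply hT; rw [h3, map_zero]
  have h5 : e (s ⊗ₜ[SNCModel k n] (Ideal.Quotient.mk J 1)) = Submodule.Quotient.mk s := by
    rw [he, TensorProduct.tensorQuotEquivQuotSMul_tmul_mk, one_smul]
  rw [h4, map_zero] at h5
  exact (Submodule.Quotient.mk_eq_zero _).mp h5.symm


lemma aux_smul_mk_quot {S : Type*} [CommRing S] (I : Ideal S) (a x : S) :
    a • (Ideal.Quotient.mk I x : S ⧸ I) = Ideal.Quotient.mk I (a * x) := by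
  rw [← Ideal.Quotient.mk_eq_mk, ← Ideal.Quotient.mk_eq_mk, ← Submodule.Quotient.mk_smul,
    smul_eq_mul]

lemma aux_factorAlgHom_mk {S : Type*} [CommRing S] (I J : Ideal S) (h : I ≤ J) (x : S) :
    factorAlgHom I J h (Ideal.Quotient.mk I x) = Ideal.Quotient.mk J x :=
  Ideal.Quotient.factor_mk h x

open Pointwise in
/-- the map `Fₙ → F × Sₙ` is an injective ring homomorphism whose range is
exactly the pairs `(f, t)` with `1 ⊗ f = t ⊗ 1` in `Sₙ ⊗_S F`; i.e.
`S₁ ×_q ⋯ ×_q Sₙ ≅ (S₁ ×_q ⋯ ×_q S_{n-1}) ×_{q'} Sₙ`. -/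
theorem statement3 (k : Type) [Field k] (m : ℕ) (hm : 1 ≤ m)
    (S : Type) [CommRing S] [Algebra (SNCModel k (m + 1)) S]
    [Module.Flat (SNCModel k (m + 1)) S] :
    Function.Injective (hierarchicalHom k S m) ∧
      ∀ p : (compatAlg k (m + 1) S (Fin.castSucc : Fin m → Fin (m + 1))) ×
          (S ⧸ xIdeal k (m + 1) S (Fin.last m)),
        (p ∈ Set.range (hierarchicalHom k S m) ↔
          (1 : S ⧸ xIdeal k (m + 1) S (Fin.last m)) ⊗ₜ[S] p.1 =
            p.2 ⊗ₜ[S] (1 : compatAlg k (m + 1) S (Fin.castSucc : Fin m → Fin (m + 1)))) := by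
  classical
  constructor
  · -- injectivity
    intro x y hxy
    have h1 : restrictAlgHom k S m x = restrictAlgHom k S m y := congrArg Prod.fst hxy
    have h2 : lastAlgHom k S m x = lastAlgHom k S m y := congrArg Prod.snd hxy
    refine Subtype.ext (funext fun j => ?_)
    induction j using Fin.lastCases with
    | last => exact h2
    | cast i => exact congrArg (fun z => z.1 i) h1
  · intro p
    obtain ⟨s, hs⟩ := Ideal.Quotient.mk_surjective p.2
    -- the bridge between the tensor condition and a divisibility condition
    have hE1 : (TensorProduct.quotTensorEquivQuotSMul ((compatAlg k (m + 1) S (Fin.castSucc : Fin m → Fin (m + 1))) : Subalgebra S _) (xIdeal k (m + 1) S (Fin.last m))) ((1 : S ⧸ (xIdeal k (m + 1) S (Fin.last m))) ⊗ₜ[S] p.1) = Submodule.Quotient.mk p.1 := by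
      rw [show (1 : S ⧸ (xIdeal k (m + 1) S (Fin.last m))) = Ideal.Quotient.mk (xIdeal k (m + 1) S (Fin.last m)) 1 from (map_one _).symm,
        TensorProduct.quotTensorEquivQuotSMul_mk_tmul, one_smul]
    have hE2 : (TensorProduct.quotTensorEquivQuotSMul ((compatAlg k (m + 1) S (Fin.castSucc : Fin m → Fin (m + 1))) : Subalgebra S _) (xIdeal k (m + 1) S (Fin.last m))) (p.2 ⊗ₜ[S] (1 : (compatAlg k (m + 1) S (Fin.castSucc : Fin m → Fin (m + 1))))) =
        Submodule.Quotient.mk (s • (1 : (compatAlg k (m + 1) S (Fin.castSucc : Fin m → Fin (m + 1))))) := by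
      rw [← hs, TensorProduct.quotTensorEquivQuotSMul_mk_tmul]
    have hbridge : ((1 : S ⧸ (xIdeal k (m + 1) S (Fin.last m))) ⊗ₜ[S] p.1 = p.2 ⊗ₜ[S] (1 : (compatAlg k (m + 1) S (Fin.castSucc : Fin m → Fin (m + 1))))) ↔
        p.1 - s • (1 : (compatAlg k (m + 1) S (Fin.castSucc : Fin m → Fin (m + 1)))) ∈ (algebraMap (SNCModel k (m + 1)) S (Ideal.Quotient.mk (sncIdeal k (m + 1)) (X (Fin.last m)))) • (⊤ : Submodule S (compatAlg k (m + 1) S (Fin.castSucc : Fin m → Fin (m + 1)))) := by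
      rw [← ((TensorProduct.quotTensorEquivQuotSMul ((compatAlg k (m + 1) S (Fin.castSucc : Fin m → Fin (m + 1))) : Subalgebra S _) (xIdeal k (m + 1) S (Fin.last m)))).injective.eq_iff, hE1, hE2, Submodule.Quotient.eq]
      rw [show ((xIdeal k (m + 1) S (Fin.last m)) • (⊤ : Submodule S
          (compatAlg k (m + 1) S (Fin.castSucc : Fin m → Fin (m + 1)))) : Submodule S
          (compatAlg k (m + 1) S (Fin.castSucc : Fin m → Fin (m + 1)))) = (algebraMap (SNCModel k (m + 1)) S (Ideal.Quotient.mk (sncIdeal k (m + 1)) (X (Fin.last m)))) • ⊤ from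
        Submodule.ideal_span_singleton_smul _ _]
    rw [hbridge]
    -- compatibility of elements of `compatAlg id`, in terms of lifts
    have hxc : ∀ x : compatAlg k (m + 1) S (id : Fin (m + 1) → Fin (m + 1)),
        ∀ a b : Fin (m + 1), a ≠ b → ∀ u v : S,
        Ideal.Quotient.mk (xIdeal k (m + 1) S a) u = x.1 a →
        Ideal.Quotient.mk (xIdeal k (m + 1) S b) v = x.1 b →
        u - v ∈ xIdeal k (m + 1) S a ⊔ xIdeal k (m + 1) S b := by
      intro x a b hab u v hu hv
      have hx2 := x.2
      simp only [compatAlg, Algebra.mem_iInf] at hx2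
      have h := hx2 a b hab
      rw [AlgHom.mem_equalizer] at h
      simp only [AlgHom.coe_comp, Function.comp_apply, Pi.evalAlgHom_apply, id] at h
      rw [← hu, ← hv, aux_factorAlgHom_mk, aux_factorAlgHom_mk] at h
      exact Ideal.Quotient.eq.mp h
    constructor
    · -- range → divisibility
      rintro ⟨x, hx⟩
      have hf : ∀ i : Fin m, (p.1 : ∀ i : Fin m, S ⧸ (xIdeal k (m + 1) S (Fin.castSucc i))) i = x.1 (Fin.castSucc i) :=
        fun i => (congrArg (fun z => (z.1 : ∀ i : Fin m, S ⧸ (xIdeal k (m + 1) S (Fin.castSucc i))) i)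
          (congrArg Prod.fst hx)).symm
      have ht : p.2 = x.1 (Fin.last m) := (congrArg Prod.snd hx).symm
      -- lifts of the first m coordinates
      have hu' : ∀ i : Fin m, ∃ u : S,
          Ideal.Quotient.mk (xIdeal k (m + 1) S (Fin.castSucc i)) u = x.1 (Fin.castSucc i) :=
        fun i => Ideal.Quotient.mk_surjective _
      choose u hu using hu'
      -- decompose u i - s
      have hkey : ∀ i : Fin m, ∃ c d : S, c * (algebraMap (SNCModel k (m + 1)) S (Ideal.Quotient.mk (sncIdeal k (m + 1)) (X (Fin.castSucc i)))) + d * (algebraMap (SNCModel k (m + 1)) S (Ideal.Quotient.mk (sncIdeal k (m + 1)) (X (Fin.last m)))) = u i - s := by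
        intro i
        have hne : Fin.castSucc i ≠ Fin.last m := (Fin.castSucc_lt_last i).ne
        have hmem := hxc x (Fin.castSucc i) (Fin.last m) hne (u i) s (hu i) (by rw [hs, ht])
        rw [show (xIdeal k (m + 1) S (Fin.castSucc i)) ⊔ (xIdeal k (m + 1) S (Fin.last m)) = Ideal.span {(algebraMap (SNCModel k (m + 1)) S (Ideal.Quotient.mk (sncIdeal k (m + 1)) (X (Fin.castSucc i)))), (algebraMap (SNCModel k (m + 1)) S (Ideal.Quotient.mk (sncIdeal k (m + 1)) (X (Fin.last m))))} from by
            rw [show (xIdeal k (m + 1) S (Fin.castSucc i)) = Ideal.span {(algebraMap (SNCModel k (m + 1)) S (Ideal.Quotient.mk (sncIdeal k (m + 1)) (X (Fin.castSucc i))))} from rfl,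
              show (xIdeal k (m + 1) S (Fin.last m)) = Ideal.span {(algebraMap (SNCModel k (m + 1)) S (Ideal.Quotient.mk (sncIdeal k (m + 1)) (X (Fin.last m))))} from rfl, ← Ideal.span_insert]] at hmem
        exact Ideal.mem_span_pair.mp hmem
      choose c d hcd using hkey
      -- the compatible tuple g
      have hgmem : (fun i : Fin m => Ideal.Quotient.mk (xIdeal k (m + 1) S (Fin.castSucc i)) (d i)) ∈ (compatAlg k (m + 1) S (Fin.castSucc : Fin m → Fin (m + 1))) := by
        simp only [compatAlg, Algebra.mem_iInf]
        intro i j hij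
        rw [AlgHom.mem_equalizer]
        simp only [AlgHom.coe_comp, Function.comp_apply, Pi.evalAlgHom_apply]
        rw [aux_factorAlgHom_mk, aux_factorAlgHom_mk, Ideal.Quotient.eq]
        refine aux_key_reg k S (Fin.castSucc i) (Fin.castSucc j) (Fin.last m)
          ((Fin.castSucc_injective m).ne hij) (Fin.castSucc_lt_last i).ne'
          (Fin.castSucc_lt_last j).ne' (d i - d j) ?_
        have heq : (algebraMap (SNCModel k (m + 1)) S (Ideal.Quotient.mk (sncIdeal k (m + 1)) (X (Fin.last m)))) * (d i - d j) =
            (u i - u j) - c i * (algebraMap (SNCModel k (m + 1)) S (Ideal.Quotient.mk (sncIdeal k (m + 1)) (X (Fin.castSucc i)))) + c j * (algebraMap (SNCModel k (m + 1)) S (Ideal.Quotient.mk (sncIdeal k (m + 1)) (X (Fin.castSucc j)))) := by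
          linear_combination (hcd i) - (hcd j)
        rw [heq]
        have h1 : u i - u j ∈ (xIdeal k (m + 1) S (Fin.castSucc i)) ⊔ (xIdeal k (m + 1) S (Fin.castSucc j)) :=
          hxc x (Fin.castSucc i) (Fin.castSucc j) ((Fin.castSucc_injective m).ne hij)
            (u i) (u j) (hu i) (hu j)
        have h2 : (algebraMap (SNCModel k (m + 1)) S (Ideal.Quotient.mk (sncIdeal k (m + 1)) (X (Fin.castSucc i)))) ∈ (xIdeal k (m + 1) S (Fin.castSucc i)) := Ideal.subset_span rfl
        have h3 : (algebraMap (SNCModel k (m + 1)) S (Ideal.Quotient.mk (sncIdeal k (m + 1)) (X (Fin.castSucc j)))) ∈ (xIdeal k (m + 1) S (Fin.castSucc j)) := Ideal.subset_span rfl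
        exact add_mem (sub_mem h1 (Ideal.mul_mem_left _ _ (Ideal.mem_sup_left h2)))
          (Ideal.mul_mem_left _ _ (Ideal.mem_sup_right h3))
      -- conclude
      have heq : p.1 - s • (1 : (compatAlg k (m + 1) S (Fin.castSucc : Fin m → Fin (m + 1)))) =
          (algebraMap (SNCModel k (m + 1)) S (Ideal.Quotient.mk (sncIdeal k (m + 1)) (X (Fin.last m)))) • (⟨fun i : Fin m => Ideal.Quotient.mk (xIdeal k (m + 1) S (Fin.castSucc i)) (d i), hgmem⟩ : (compatAlg k (m + 1) S (Fin.castSucc : Fin m → Fin (m + 1)))) := by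
        refine Subtype.ext (funext fun i => ?_)
        show (p.1 : ∀ i : Fin m, S ⧸ (xIdeal k (m + 1) S (Fin.castSucc i))) i - s • (1 : S ⧸ (xIdeal k (m + 1) S (Fin.castSucc i))) =
          (algebraMap (SNCModel k (m + 1)) S (Ideal.Quotient.mk (sncIdeal k (m + 1)) (X (Fin.last m)))) • Ideal.Quotient.mk (xIdeal k (m + 1) S (Fin.castSucc i)) (d i)
        rw [hf i, ← hu i, show (1 : S ⧸ (xIdeal k (m + 1) S (Fin.castSucc i))) = Ideal.Quotient.mk (xIdeal k (m + 1) S (Fin.castSucc i)) 1 from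
          (map_one _).symm, aux_smul_mk_quot, aux_smul_mk_quot, ← map_sub, mul_one]
        refine Ideal.Quotient.eq.mpr ?_
        have h4 : u i - s - (algebraMap (SNCModel k (m + 1)) S (Ideal.Quotient.mk (sncIdeal k (m + 1)) (X (Fin.last m)))) * d i = c i * (algebraMap (SNCModel k (m + 1)) S (Ideal.Quotient.mk (sncIdeal k (m + 1)) (X (Fin.castSucc i)))) := by linear_combination -(hcd i)
        rw [h4]
        exact Ideal.mul_mem_left _ _ (Ideal.subset_span rfl)
      rw [heq]
      exact Submodule.smul_mem_pointwise_smul _ _ _ Submodule.mem_top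
    · -- divisibility → range
      intro hmem
      obtain ⟨g, -, hg⟩ := Set.mem_smul_set.mp
        (show (p.1 - s • (1 : (compatAlg k (m + 1) S (Fin.castSucc : Fin m → Fin (m + 1)))) : (compatAlg k (m + 1) S (Fin.castSucc : Fin m → Fin (m + 1)))) ∈ (algebraMap (SNCModel k (m + 1)) S (Ideal.Quotient.mk (sncIdeal k (m + 1)) (X (Fin.last m)))) • ((⊤ : Submodule S (compatAlg k (m + 1) S (Fin.castSucc : Fin m → Fin (m + 1)))) : Set (compatAlg k (m + 1) S (Fin.castSucc : Fin m → Fin (m + 1)))) by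
          rw [← Submodule.coe_pointwise_smul]; exact hmem)
      -- lifts of g
      have hw' : ∀ i : Fin m, ∃ w : S,
          Ideal.Quotient.mk (xIdeal k (m + 1) S (Fin.castSucc i)) w = (g : ∀ i : Fin m, S ⧸ (xIdeal k (m + 1) S (Fin.castSucc i))) i :=
        fun i => Ideal.Quotient.mk_surjective _
      choose w hw using hw'
      have hfi : ∀ i : Fin m, (p.1 : ∀ i : Fin m, S ⧸ (xIdeal k (m + 1) S (Fin.castSucc i))) i =
          Ideal.Quotient.mk (xIdeal k (m + 1) S (Fin.castSucc i)) (s + (algebraMap (SNCModel k (m + 1)) S (Ideal.Quotient.mk (sncIdeal k (m + 1)) (X (Fin.last m)))) * w i) := by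
        intro i
        have h5 : (p.1 : ∀ i : Fin m, S ⧸ (xIdeal k (m + 1) S (Fin.castSucc i))) i - s • (1 : S ⧸ (xIdeal k (m + 1) S (Fin.castSucc i))) =
            (algebraMap (SNCModel k (m + 1)) S (Ideal.Quotient.mk (sncIdeal k (m + 1)) (X (Fin.last m)))) • (g : ∀ i : Fin m, S ⧸ (xIdeal k (m + 1) S (Fin.castSucc i))) i :=
          congrArg (fun z : (compatAlg k (m + 1) S (Fin.castSucc : Fin m → Fin (m + 1))) => (z : ∀ i : Fin m, S ⧸ (xIdeal k (m + 1) S (Fin.castSucc i))) i) hg.symm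
        rw [← hw i, show (1 : S ⧸ (xIdeal k (m + 1) S (Fin.castSucc i))) = Ideal.Quotient.mk (xIdeal k (m + 1) S (Fin.castSucc i)) 1 from
          (map_one _).symm, aux_smul_mk_quot, aux_smul_mk_quot, mul_one] at h5
        have h6 := sub_eq_iff_eq_add.mp h5
        rw [h6, ← map_add]
        ring_nf
      -- the glued tuple
      have hy : (Fin.lastCases p.2 (fun i : Fin m => (p.1 : ∀ i : Fin m, S ⧸ (xIdeal k (m + 1) S (Fin.castSucc i))) i) :
          ∀ j : Fin (m + 1), S ⧸ xIdeal k (m + 1) S j) ∈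
          compatAlg k (m + 1) S (id : Fin (m + 1) → Fin (m + 1)) := by
        simp only [compatAlg, Algebra.mem_iInf]
        intro a b hab
        rw [AlgHom.mem_equalizer]
        simp only [AlgHom.coe_comp, Function.comp_apply, Pi.evalAlgHom_apply, id]
        rcases Fin.eq_castSucc_or_eq_last a with ⟨i, rfl⟩ | rfl
        · rcases Fin.eq_castSucc_or_eq_last b with ⟨j, rfl⟩ | rfl
          · -- both in the first m coordinates: use compatibility of p.1
            rw [Fin.lastCases_castSucc, Fin.lastCases_castSucc]
            have hij : i ≠ j := fun h => hab (by rw [h])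
            have hp := p.1.2
            simp only [compatAlg, Algebra.mem_iInf] at hp
            have h := hp i j hij
            rw [AlgHom.mem_equalizer] at h
            simpa only [AlgHom.coe_comp, Function.comp_apply, Pi.evalAlgHom_apply] using h
          · -- (castSucc i, last)
            rw [Fin.lastCases_castSucc, Fin.lastCases_last, hfi i, ← hs,
              aux_factorAlgHom_mk, aux_factorAlgHom_mk, Ideal.Quotient.eq]
            have h7 : s + (algebraMap (SNCModel k (m + 1)) S (Ideal.Quotient.mk (sncIdeal k (m + 1)) (X (Fin.last m)))) * w i - s = (algebraMap (SNCModel k (m + 1)) S (Ideal.Quotient.mk (sncIdeal k (m + 1)) (X (Fin.last m)))) * w i := by ring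
            rw [h7]
            exact Ideal.mul_mem_right _ _ (Ideal.mem_sup_right (Ideal.subset_span rfl))
        · rcases Fin.eq_castSucc_or_eq_last b with ⟨j, rfl⟩ | rfl
          · -- (last, castSucc j)
            rw [Fin.lastCases_castSucc, Fin.lastCases_last, hfi j, ← hs,
              aux_factorAlgHom_mk, aux_factorAlgHom_mk, Ideal.Quotient.eq]
            have h7 : s - (s + (algebraMap (SNCModel k (m + 1)) S (Ideal.Quotient.mk (sncIdeal k (m + 1)) (X (Fin.last m)))) * w j) = -((algebraMap (SNCModel k (m + 1)) S (Ideal.Quotient.mk (sncIdeal k (m + 1)) (X (Fin.last m)))) * w j) := by ring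
            rw [h7]
            exact neg_mem (Ideal.mul_mem_right _ _ (Ideal.mem_sup_left (Ideal.subset_span rfl)))
          · exact absurd rfl hab
      refine ⟨⟨_, hy⟩, ?_⟩
      have hfst : (hierarchicalHom k S m ⟨_, hy⟩).1 = p.1 := by
        refine Subtype.ext (funext fun i => ?_)
        show (Fin.lastCases p.2 (fun i : Fin m => (p.1 : ∀ i : Fin m, S ⧸ (xIdeal k (m + 1) S (Fin.castSucc i))) i) :
          ∀ j : Fin (m + 1), S ⧸ xIdeal k (m + 1) S j) (Fin.castSucc i) =
          (p.1 : ∀ i : Fin m, S ⧸ (xIdeal k (m + 1) S (Fin.castSucc i))) i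
        simp only [Fin.lastCases_castSucc]
      have hsnd : (hierarchicalHom k S m ⟨_, hy⟩).2 = p.2 := by
        show (Fin.lastCases p.2 (fun i : Fin m => (p.1 : ∀ i : Fin m, S ⧸ (xIdeal k (m + 1) S (Fin.castSucc i))) i) :
          ∀ j : Fin (m + 1), S ⧸ xIdeal k (m + 1) S j) (Fin.last m) = p.2
        simp only [Fin.lastCases_last]
      exact Prod.ext hfst hsnd
end
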